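/- Fix real parameters a1, ..., a7, b1, b2, w1, w2 with a_i > 0 for all i, a7 = a5 + a6 - a4, a4 ≠ a5, a1 ≠ a2, and b2 ≠ w2. Suppose there exists (c3, s3, c7, s7) ∈ ℝ^4 with c3^2 + s3^2 = 1, c7^2 + s7^2 = 1, (a4-a5)*s7 + a3*s3 + b1 - w1 = 0, (a5-a4)*c7 - a3*c3 + b2 - w2 = 0, and n1*(4*a1*a2 - n1) > 0, where n1 = (a1+a2)^2 - d0 and d0 = a3^2 + 2*a3*b1*s3 - 2*a3*b2*c3 + b1^2 + b2^2. Then there exist at least 2 distinct points x ∈ ℝ^14 that are singular points of the full constraint system, i.e. p(x) = 0 and the 13×14 Jacobian matrix of p at x has rank strictly less than 13. -/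

import Mathlib

/-- The Jacobian matrix of a map `f : ℝ^n → ℝ^m` at a point `x`,
whose `(i, j)` entry is the partial derivative of the `i`-th component of `f`
with respect to the `j`-th variable. -/
noncomputable def jacobian {n m : ℕ} (f : (Fin n → ℝ) → Fin m → ℝ) (x : Fin n → ℝ) :
    Matrix (Fin m) (Fin n) ℝ :=
  Matrix.of fun i j => fderiv ℝ (fun y => f y i) x (Pi.single j 1)

/-- The full constraint map `p : ℝ^14 → ℝ^13` of the Andrews squeezing mechanism,
in the variables `(c1, s1, c2, s2, c3, s3, c4, s4, c5, s5, c6, s6, c7, s7)`. -/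
noncomputable def andrewsP (a1 a2 a3 a4 a5 a6 a7 b1 b2 w1 w2 : ℝ)
    (x : Fin 14 → ℝ) : Fin 13 → ℝ :=
  ![a1 * x 0 - a2 * (x 0 * x 2 - x 1 * x 3) - a3 * x 5 - b1,
    a1 * x 1 - a2 * (x 1 * x 2 + x 0 * x 3) + a3 * x 4 - b2,
    a1 * x 0 - a2 * (x 0 * x 2 - x 1 * x 3) - a4 * (x 7 * x 8 + x 6 * x 9) - a5 * x 8 - w1,
    a1 * x 1 - a2 * (x 1 * x 2 + x 0 * x 3) + a4 * (x 6 * x 8 - x 7 * x 9) - a5 * x 9 - w2,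
    a1 * x 0 - a2 * (x 0 * x 2 - x 1 * x 3) - a6 * (x 10 * x 12 - x 11 * x 13) - a7 * x 13 - w1,
    a1 * x 1 - a2 * (x 1 * x 2 + x 0 * x 3) - a6 * (x 11 * x 12 + x 10 * x 13) + a7 * x 12 - w2,
    x 0 ^ 2 + x 1 ^ 2 - 1,
    x 2 ^ 2 + x 3 ^ 2 - 1,
    x 4 ^ 2 + x 5 ^ 2 - 1,
    x 6 ^ 2 + x 7 ^ 2 - 1,
    x 8 ^ 2 + x 9 ^ 2 - 1,
    x 10 ^ 2 + x 11 ^ 2 - 1,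
    x 12 ^ 2 + x 13 ^ 2 - 1]

/-- A point `x ∈ ℝ^14` is a singular point of the Andrews constraint system if
`p(x) = 0` and the `13 × 14` Jacobian matrix of `p` at `x` has rank `< 13`. -/
def IsSingularAndrews (a1 a2 a3 a4 a5 a6 a7 b1 b2 w1 w2 : ℝ) (x : Fin 14 → ℝ) : Prop :=
  andrewsP a1 a2 a3 a4 a5 a6 a7 b1 b2 w1 w2 x = 0 ∧
  (jacobian (andrewsP a1 a2 a3 a4 a5 a6 a7 b1 b2 w1 w2) x).rank < 13

open Matrix

lemma rank_lt_of_vecMul_eq_zero {m n : ℕ} (M : Matrix (Fin m) (Fin n) ℝ) {v : Fin m → ℝ}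
    (hv : v ≠ 0) (h : Matrix.vecMul v M = 0) : M.rank < m := by
  rw [← M.rank_transpose]
  have hker : v ∈ LinearMap.ker (Matrix.mulVecLin Mᵀ) := by
    simp [LinearMap.mem_ker, Matrix.mulVecLin_apply, Matrix.mulVec_transpose, h]
  have hk : 0 < Module.finrank ℝ (LinearMap.ker (Matrix.mulVecLin Mᵀ)) := by
    rw [Module.finrank_pos_iff]
    exact ⟨⟨⟨v, hker⟩, 0, by simpa using hv⟩⟩
  have := LinearMap.finrank_range_add_finrank_ker (Matrix.mulVecLin Mᵀ)
  rw [Module.finrank_pi] at this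
  simp only [Fintype.card_fin] at this
  rw [Matrix.rank]
  omega

section evals
variable {α : Type*} (e0 e1 e2 e3 e4 e5 e6 e7 e8 e9 e10 e11 e12 e13 : α)
lemma ev14_0 : ![e0,e1,e2,e3,e4,e5,e6,e7,e8,e9,e10,e11,e12,e13] (0 : Fin 14) = e0 := rfl
lemma ev14_1 : ![e0,e1,e2,e3,e4,e5,e6,e7,e8,e9,e10,e11,e12,e13] (1 : Fin 14) = e1 := rfl
lemma ev14_2 : ![e0,e1,e2,e3,e4,e5,e6,e7,e8,e9,e10,e11,e12,e13] (2 : Fin 14) = e2 := rfl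
lemma ev14_3 : ![e0,e1,e2,e3,e4,e5,e6,e7,e8,e9,e10,e11,e12,e13] (3 : Fin 14) = e3 := rfl
lemma ev14_4 : ![e0,e1,e2,e3,e4,e5,e6,e7,e8,e9,e10,e11,e12,e13] (4 : Fin 14) = e4 := rfl
lemma ev14_5 : ![e0,e1,e2,e3,e4,e5,e6,e7,e8,e9,e10,e11,e12,e13] (5 : Fin 14) = e5 := rfl
lemma ev14_6 : ![e0,e1,e2,e3,e4,e5,e6,e7,e8,e9,e10,e11,e12,e13] (6 : Fin 14) = e6 := rfl
lemma ev14_7 : ![e0,e1,e2,e3,e4,e5,e6,e7,e8,e9,e10,e11,e12,e13] (7 : Fin 14) = e7 := rfl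
lemma ev14_8 : ![e0,e1,e2,e3,e4,e5,e6,e7,e8,e9,e10,e11,e12,e13] (8 : Fin 14) = e8 := rfl
lemma ev14_9 : ![e0,e1,e2,e3,e4,e5,e6,e7,e8,e9,e10,e11,e12,e13] (9 : Fin 14) = e9 := rfl
lemma ev14_10 : ![e0,e1,e2,e3,e4,e5,e6,e7,e8,e9,e10,e11,e12,e13] (10 : Fin 14) = e10 := rfl
lemma ev14_11 : ![e0,e1,e2,e3,e4,e5,e6,e7,e8,e9,e10,e11,e12,e13] (11 : Fin 14) = e11 := rfl
lemma ev14_12 : ![e0,e1,e2,e3,e4,e5,e6,e7,e8,e9,e10,e11,e12,e13] (12 : Fin 14) = e12 := rfl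
lemma ev14_13 : ![e0,e1,e2,e3,e4,e5,e6,e7,e8,e9,e10,e11,e12,e13] (13 : Fin 14) = e13 := rfl
lemma ev13_0 : ![e0,e1,e2,e3,e4,e5,e6,e7,e8,e9,e10,e11,e12] (0 : Fin 13) = e0 := rfl
lemma ev13_1 : ![e0,e1,e2,e3,e4,e5,e6,e7,e8,e9,e10,e11,e12] (1 : Fin 13) = e1 := rfl
lemma ev13_2 : ![e0,e1,e2,e3,e4,e5,e6,e7,e8,e9,e10,e11,e12] (2 : Fin 13) = e2 := rfl
lemma ev13_3 : ![e0,e1,e2,e3,e4,e5,e6,e7,e8,e9,e10,e11,e12] (3 : Fin 13) = e3 := rfl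
lemma ev13_4 : ![e0,e1,e2,e3,e4,e5,e6,e7,e8,e9,e10,e11,e12] (4 : Fin 13) = e4 := rfl
lemma ev13_5 : ![e0,e1,e2,e3,e4,e5,e6,e7,e8,e9,e10,e11,e12] (5 : Fin 13) = e5 := rfl
lemma ev13_6 : ![e0,e1,e2,e3,e4,e5,e6,e7,e8,e9,e10,e11,e12] (6 : Fin 13) = e6 := rfl
lemma ev13_7 : ![e0,e1,e2,e3,e4,e5,e6,e7,e8,e9,e10,e11,e12] (7 : Fin 13) = e7 := rfl
lemma ev13_8 : ![e0,e1,e2,e3,e4,e5,e6,e7,e8,e9,e10,e11,e12] (8 : Fin 13) = e8 := rfl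
lemma ev13_9 : ![e0,e1,e2,e3,e4,e5,e6,e7,e8,e9,e10,e11,e12] (9 : Fin 13) = e9 := rfl
lemma ev13_10 : ![e0,e1,e2,e3,e4,e5,e6,e7,e8,e9,e10,e11,e12] (10 : Fin 13) = e10 := rfl
lemma ev13_11 : ![e0,e1,e2,e3,e4,e5,e6,e7,e8,e9,e10,e11,e12] (11 : Fin 13) = e11 := rfl
lemma ev13_12 : ![e0,e1,e2,e3,e4,e5,e6,e7,e8,e9,e10,e11,e12] (12 : Fin 13) = e12 := rfl
end evals

lemma jacRow0 (a1 a2 a3 a4 a5 a6 a7 b1 b2 w1 w2 : ℝ) (x : Fin 14 → ℝ) (j : Fin 14) :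
    jacobian (andrewsP a1 a2 a3 a4 a5 a6 a7 b1 b2 w1 w2) x (0 : Fin 13) j =
    ![a1 - a2 * x 2, a2 * x 3, -(a2 * x 0), a2 * x 1, 0, -a3, 0, 0, 0, 0, 0, 0, 0, 0] j := by
  have h : ∀ (k : Fin 14), HasFDerivAt (fun y : Fin 14 → ℝ => y k)
      (ContinuousLinearMap.proj k : (Fin 14 → ℝ) →L[ℝ] ℝ) x := fun k => hasFDerivAt_apply k x
  show fderiv ℝ (fun y : Fin 14 → ℝ =>
      a1 * y 0 - a2 * (y 0 * y 2 - y 1 * y 3) - a3 * y 5 - b1) x (Pi.single j 1) = _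
  have H := (((((h 0).const_mul a1).sub
      ((((h 0).mul (h 2)).sub ((h 1).mul (h 3))).const_mul a2)).sub
      ((h 5).const_mul a3)).sub_const b1)
  erw [H.fderiv]
  simp only [ContinuousLinearMap.sub_apply, ContinuousLinearMap.add_apply,
    ContinuousLinearMap.smul_apply, ContinuousLinearMap.proj_apply, Pi.single_apply,
    smul_eq_mul]
  fin_cases j <;> simp (config := { decide := true }) <;> first | rfl | (simp only [ev14_0, ev14_1, ev14_2, ev14_3, ev14_4, ev14_5, ev14_6, ev14_7, ev14_8, ev14_9, ev14_10, ev14_11, ev14_12, ev14_13]; ring) | ring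

lemma jacRow1 (a1 a2 a3 a4 a5 a6 a7 b1 b2 w1 w2 : ℝ) (x : Fin 14 → ℝ) (j : Fin 14) :
    jacobian (andrewsP a1 a2 a3 a4 a5 a6 a7 b1 b2 w1 w2) x (1 : Fin 13) j =
    ![-(a2 * x 3), a1 - a2 * x 2, -(a2 * x 1), -(a2 * x 0), a3, 0, 0, 0, 0, 0, 0, 0, 0, 0] j := by
  have h : ∀ (k : Fin 14), HasFDerivAt (fun y : Fin 14 → ℝ => y k)
      (ContinuousLinearMap.proj k : (Fin 14 → ℝ) →L[ℝ] ℝ) x := fun k => hasFDerivAt_apply k x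
  show fderiv ℝ (fun y : Fin 14 → ℝ =>
      a1 * y 1 - a2 * (y 1 * y 2 + y 0 * y 3) + a3 * y 4 - b2) x (Pi.single j 1) = _
  have H := ((((h 1).const_mul a1).sub
      ((((h 1).mul (h 2)).add ((h 0).mul (h 3))).const_mul a2)).add
      ((h 4).const_mul a3)).sub_const b2
  erw [H.fderiv]
  simp only [ContinuousLinearMap.sub_apply, ContinuousLinearMap.add_apply,
    ContinuousLinearMap.smul_apply, ContinuousLinearMap.proj_apply, Pi.single_apply,
    smul_eq_mul]
  fin_cases j <;> simp (config := { decide := true }) <;> first | rfl | (simp only [ev14_0, ev14_1, ev14_2, ev14_3, ev14_4, ev14_5, ev14_6, ev14_7, ev14_8, ev14_9, ev14_10, ev14_11, ev14_12, ev14_13]; ring) | ring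

lemma jacRow2 (a1 a2 a3 a4 a5 a6 a7 b1 b2 w1 w2 : ℝ) (x : Fin 14 → ℝ) (j : Fin 14) :
    jacobian (andrewsP a1 a2 a3 a4 a5 a6 a7 b1 b2 w1 w2) x (2 : Fin 13) j =
    ![a1 - a2 * x 2, a2 * x 3, -(a2 * x 0), a2 * x 1, 0, 0, -(a4 * x 9), -(a4 * x 8), -(a4 * x 7) - a5, -(a4 * x 6), 0, 0, 0, 0] j := by
  have h : ∀ (k : Fin 14), HasFDerivAt (fun y : Fin 14 → ℝ => y k)
      (ContinuousLinearMap.proj k : (Fin 14 → ℝ) →L[ℝ] ℝ) x := fun k => hasFDerivAt_apply k x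
  show fderiv ℝ (fun y : Fin 14 → ℝ =>
      a1 * y 0 - a2 * (y 0 * y 2 - y 1 * y 3) - a4 * (y 7 * y 8 + y 6 * y 9) - a5 * y 8 - w1) x
      (Pi.single j 1) = _
  have H := (((((h 0).const_mul a1).sub
      ((((h 0).mul (h 2)).sub ((h 1).mul (h 3))).const_mul a2)).sub
      ((((h 7).mul (h 8)).add ((h 6).mul (h 9))).const_mul a4)).sub
      ((h 8).const_mul a5)).sub_const w1
  erw [H.fderiv]
  simp only [ContinuousLinearMap.sub_apply, ContinuousLinearMap.add_apply,
    ContinuousLinearMap.smul_apply, ContinuousLinearMap.proj_apply, Pi.single_apply,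
    smul_eq_mul]
  fin_cases j <;> simp (config := { decide := true }) <;> first | rfl | (simp only [ev14_0, ev14_1, ev14_2, ev14_3, ev14_4, ev14_5, ev14_6, ev14_7, ev14_8, ev14_9, ev14_10, ev14_11, ev14_12, ev14_13]; ring) | ring

lemma jacRow3 (a1 a2 a3 a4 a5 a6 a7 b1 b2 w1 w2 : ℝ) (x : Fin 14 → ℝ) (j : Fin 14) :
    jacobian (andrewsP a1 a2 a3 a4 a5 a6 a7 b1 b2 w1 w2) x (3 : Fin 13) j =
    ![-(a2 * x 3), a1 - a2 * x 2, -(a2 * x 1), -(a2 * x 0), 0, 0, a4 * x 8, -(a4 * x 9), a4 * x 6, -(a4 * x 7) - a5, 0, 0, 0, 0] j := by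
  have h : ∀ (k : Fin 14), HasFDerivAt (fun y : Fin 14 → ℝ => y k)
      (ContinuousLinearMap.proj k : (Fin 14 → ℝ) →L[ℝ] ℝ) x := fun k => hasFDerivAt_apply k x
  show fderiv ℝ (fun y : Fin 14 → ℝ =>
      a1 * y 1 - a2 * (y 1 * y 2 + y 0 * y 3) + a4 * (y 6 * y 8 - y 7 * y 9) - a5 * y 9 - w2) x
      (Pi.single j 1) = _
  have H := (((((h 1).const_mul a1).sub
      ((((h 1).mul (h 2)).add ((h 0).mul (h 3))).const_mul a2)).add
      ((((h 6).mul (h 8)).sub ((h 7).mul (h 9))).const_mul a4)).sub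
      ((h 9).const_mul a5)).sub_const w2
  erw [H.fderiv]
  simp only [ContinuousLinearMap.sub_apply, ContinuousLinearMap.add_apply,
    ContinuousLinearMap.smul_apply, ContinuousLinearMap.proj_apply, Pi.single_apply,
    smul_eq_mul]
  fin_cases j <;> simp (config := { decide := true }) <;> first | rfl | (simp only [ev14_0, ev14_1, ev14_2, ev14_3, ev14_4, ev14_5, ev14_6, ev14_7, ev14_8, ev14_9, ev14_10, ev14_11, ev14_12, ev14_13]; ring) | ring

lemma jacRow4 (a1 a2 a3 a4 a5 a6 a7 b1 b2 w1 w2 : ℝ) (x : Fin 14 → ℝ) (j : Fin 14) :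
    jacobian (andrewsP a1 a2 a3 a4 a5 a6 a7 b1 b2 w1 w2) x (4 : Fin 13) j =
    ![a1 - a2 * x 2, a2 * x 3, -(a2 * x 0), a2 * x 1, 0, 0, 0, 0, 0, 0, -(a6 * x 12), a6 * x 13, -(a6 * x 10), a6 * x 11 - a7] j := by
  have h : ∀ (k : Fin 14), HasFDerivAt (fun y : Fin 14 → ℝ => y k)
      (ContinuousLinearMap.proj k : (Fin 14 → ℝ) →L[ℝ] ℝ) x := fun k => hasFDerivAt_apply k x
  show fderiv ℝ (fun y : Fin 14 → ℝ =>
      a1 * y 0 - a2 * (y 0 * y 2 - y 1 * y 3) - a6 * (y 10 * y 12 - y 11 * y 13) - a7 * y 13 - w1)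
      x (Pi.single j 1) = _
  have H := (((((h 0).const_mul a1).sub
      ((((h 0).mul (h 2)).sub ((h 1).mul (h 3))).const_mul a2)).sub
      ((((h 10).mul (h 12)).sub ((h 11).mul (h 13))).const_mul a6)).sub
      ((h 13).const_mul a7)).sub_const w1
  erw [H.fderiv]
  simp only [ContinuousLinearMap.sub_apply, ContinuousLinearMap.add_apply,
    ContinuousLinearMap.smul_apply, ContinuousLinearMap.proj_apply, Pi.single_apply,
    smul_eq_mul]
  fin_cases j <;> simp (config := { decide := true }) <;> first | rfl | (simp only [ev14_0, ev14_1, ev14_2, ev14_3, ev14_4, ev14_5, ev14_6, ev14_7, ev14_8, ev14_9, ev14_10, ev14_11, ev14_12, ev14_13]; ring) | ring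

lemma jacRow5 (a1 a2 a3 a4 a5 a6 a7 b1 b2 w1 w2 : ℝ) (x : Fin 14 → ℝ) (j : Fin 14) :
    jacobian (andrewsP a1 a2 a3 a4 a5 a6 a7 b1 b2 w1 w2) x (5 : Fin 13) j =
    ![-(a2 * x 3), a1 - a2 * x 2, -(a2 * x 1), -(a2 * x 0), 0, 0, 0, 0, 0, 0, -(a6 * x 13), -(a6 * x 12), -(a6 * x 11) + a7, -(a6 * x 10)] j := by
  have h : ∀ (k : Fin 14), HasFDerivAt (fun y : Fin 14 → ℝ => y k)
      (ContinuousLinearMap.proj k : (Fin 14 → ℝ) →L[ℝ] ℝ) x := fun k => hasFDerivAt_apply k x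
  show fderiv ℝ (fun y : Fin 14 → ℝ =>
      a1 * y 1 - a2 * (y 1 * y 2 + y 0 * y 3) - a6 * (y 11 * y 12 + y 10 * y 13) + a7 * y 12 - w2)
      x (Pi.single j 1) = _
  have H := (((((h 1).const_mul a1).sub
      ((((h 1).mul (h 2)).add ((h 0).mul (h 3))).const_mul a2)).sub
      ((((h 11).mul (h 12)).add ((h 10).mul (h 13))).const_mul a6)).add
      ((h 12).const_mul a7)).sub_const w2
  erw [H.fderiv]
  simp only [ContinuousLinearMap.sub_apply, ContinuousLinearMap.add_apply,
    ContinuousLinearMap.smul_apply, ContinuousLinearMap.proj_apply, Pi.single_apply,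
    smul_eq_mul]
  fin_cases j <;> simp (config := { decide := true }) <;> first | rfl | (simp only [ev14_0, ev14_1, ev14_2, ev14_3, ev14_4, ev14_5, ev14_6, ev14_7, ev14_8, ev14_9, ev14_10, ev14_11, ev14_12, ev14_13]; ring) | ring

lemma jacRow6 (a1 a2 a3 a4 a5 a6 a7 b1 b2 w1 w2 : ℝ) (x : Fin 14 → ℝ) (j : Fin 14) :
    jacobian (andrewsP a1 a2 a3 a4 a5 a6 a7 b1 b2 w1 w2) x (6 : Fin 13) j =
    ![2 * x 0, 2 * x 1, 0, 0, 0, 0, 0, 0, 0, 0, 0, 0, 0, 0] j := by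
  have h : ∀ (k : Fin 14), HasFDerivAt (fun y : Fin 14 → ℝ => y k)
      (ContinuousLinearMap.proj k : (Fin 14 → ℝ) →L[ℝ] ℝ) x := fun k => hasFDerivAt_apply k x
  show fderiv ℝ (fun y : Fin 14 → ℝ => y 0 ^ 2 + y 1 ^ 2 - 1) x (Pi.single j 1) = _
  have H0 := (((h 0).mul (h 0)).add ((h 1).mul (h 1))).sub_const (1:ℝ)
  rw [show (fun y : Fin 14 → ℝ => y 0 ^ 2 + y 1 ^ 2 - 1) = fun y : Fin 14 → ℝ => y 0 * y 0 + y 1 * y 1 - 1 from by funext y; ring]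
  have H := H0
  erw [H.fderiv]
  simp only [ContinuousLinearMap.sub_apply, ContinuousLinearMap.add_apply,
    ContinuousLinearMap.smul_apply, ContinuousLinearMap.proj_apply, Pi.single_apply,
    smul_eq_mul]
  fin_cases j <;> simp (config := { decide := true }) <;> first | rfl | (simp only [ev14_0, ev14_1, ev14_2, ev14_3, ev14_4, ev14_5, ev14_6, ev14_7, ev14_8, ev14_9, ev14_10, ev14_11, ev14_12, ev14_13]; ring) | ring

lemma jacRow7 (a1 a2 a3 a4 a5 a6 a7 b1 b2 w1 w2 : ℝ) (x : Fin 14 → ℝ) (j : Fin 14) :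
    jacobian (andrewsP a1 a2 a3 a4 a5 a6 a7 b1 b2 w1 w2) x (7 : Fin 13) j =
    ![0, 0, 2 * x 2, 2 * x 3, 0, 0, 0, 0, 0, 0, 0, 0, 0, 0] j := by
  have h : ∀ (k : Fin 14), HasFDerivAt (fun y : Fin 14 → ℝ => y k)
      (ContinuousLinearMap.proj k : (Fin 14 → ℝ) →L[ℝ] ℝ) x := fun k => hasFDerivAt_apply k x
  show fderiv ℝ (fun y : Fin 14 → ℝ => y 2 ^ 2 + y 3 ^ 2 - 1) x (Pi.single j 1) = _
  have H0 := (((h 2).mul (h 2)).add ((h 3).mul (h 3))).sub_const (1:ℝ)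
  rw [show (fun y : Fin 14 → ℝ => y 2 ^ 2 + y 3 ^ 2 - 1) = fun y : Fin 14 → ℝ => y 2 * y 2 + y 3 * y 3 - 1 from by funext y; ring]
  have H := H0
  erw [H.fderiv]
  simp only [ContinuousLinearMap.sub_apply, ContinuousLinearMap.add_apply,
    ContinuousLinearMap.smul_apply, ContinuousLinearMap.proj_apply, Pi.single_apply,
    smul_eq_mul]
  fin_cases j <;> simp (config := { decide := true }) <;> first | rfl | (simp only [ev14_0, ev14_1, ev14_2, ev14_3, ev14_4, ev14_5, ev14_6, ev14_7, ev14_8, ev14_9, ev14_10, ev14_11, ev14_12, ev14_13]; ring) | ring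

lemma jacRow8 (a1 a2 a3 a4 a5 a6 a7 b1 b2 w1 w2 : ℝ) (x : Fin 14 → ℝ) (j : Fin 14) :
    jacobian (andrewsP a1 a2 a3 a4 a5 a6 a7 b1 b2 w1 w2) x (8 : Fin 13) j =
    ![0, 0, 0, 0, 2 * x 4, 2 * x 5, 0, 0, 0, 0, 0, 0, 0, 0] j := by
  have h : ∀ (k : Fin 14), HasFDerivAt (fun y : Fin 14 → ℝ => y k)
      (ContinuousLinearMap.proj k : (Fin 14 → ℝ) →L[ℝ] ℝ) x := fun k => hasFDerivAt_apply k x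
  show fderiv ℝ (fun y : Fin 14 → ℝ => y 4 ^ 2 + y 5 ^ 2 - 1) x (Pi.single j 1) = _
  have H0 := (((h 4).mul (h 4)).add ((h 5).mul (h 5))).sub_const (1:ℝ)
  rw [show (fun y : Fin 14 → ℝ => y 4 ^ 2 + y 5 ^ 2 - 1) = fun y : Fin 14 → ℝ => y 4 * y 4 + y 5 * y 5 - 1 from by funext y; ring]
  have H := H0
  erw [H.fderiv]
  simp only [ContinuousLinearMap.sub_apply, ContinuousLinearMap.add_apply,
    ContinuousLinearMap.smul_apply, ContinuousLinearMap.proj_apply, Pi.single_apply,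
    smul_eq_mul]
  fin_cases j <;> simp (config := { decide := true }) <;> first | rfl | (simp only [ev14_0, ev14_1, ev14_2, ev14_3, ev14_4, ev14_5, ev14_6, ev14_7, ev14_8, ev14_9, ev14_10, ev14_11, ev14_12, ev14_13]; ring) | ring

lemma jacRow9 (a1 a2 a3 a4 a5 a6 a7 b1 b2 w1 w2 : ℝ) (x : Fin 14 → ℝ) (j : Fin 14) :
    jacobian (andrewsP a1 a2 a3 a4 a5 a6 a7 b1 b2 w1 w2) x (9 : Fin 13) j =
    ![0, 0, 0, 0, 0, 0, 2 * x 6, 2 * x 7, 0, 0, 0, 0, 0, 0] j := by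
  have h : ∀ (k : Fin 14), HasFDerivAt (fun y : Fin 14 → ℝ => y k)
      (ContinuousLinearMap.proj k : (Fin 14 → ℝ) →L[ℝ] ℝ) x := fun k => hasFDerivAt_apply k x
  show fderiv ℝ (fun y : Fin 14 → ℝ => y 6 ^ 2 + y 7 ^ 2 - 1) x (Pi.single j 1) = _
  have H0 := (((h 6).mul (h 6)).add ((h 7).mul (h 7))).sub_const (1:ℝ)
  rw [show (fun y : Fin 14 → ℝ => y 6 ^ 2 + y 7 ^ 2 - 1) = fun y : Fin 14 → ℝ => y 6 * y 6 + y 7 * y 7 - 1 from by funext y; ring]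
  have H := H0
  erw [H.fderiv]
  simp only [ContinuousLinearMap.sub_apply, ContinuousLinearMap.add_apply,
    ContinuousLinearMap.smul_apply, ContinuousLinearMap.proj_apply, Pi.single_apply,
    smul_eq_mul]
  fin_cases j <;> simp (config := { decide := true }) <;> first | rfl | (simp only [ev14_0, ev14_1, ev14_2, ev14_3, ev14_4, ev14_5, ev14_6, ev14_7, ev14_8, ev14_9, ev14_10, ev14_11, ev14_12, ev14_13]; ring) | ring

lemma jacRow10 (a1 a2 a3 a4 a5 a6 a7 b1 b2 w1 w2 : ℝ) (x : Fin 14 → ℝ) (j : Fin 14) :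
    jacobian (andrewsP a1 a2 a3 a4 a5 a6 a7 b1 b2 w1 w2) x (10 : Fin 13) j =
    ![0, 0, 0, 0, 0, 0, 0, 0, 2 * x 8, 2 * x 9, 0, 0, 0, 0] j := by
  have h : ∀ (k : Fin 14), HasFDerivAt (fun y : Fin 14 → ℝ => y k)
      (ContinuousLinearMap.proj k : (Fin 14 → ℝ) →L[ℝ] ℝ) x := fun k => hasFDerivAt_apply k x
  show fderiv ℝ (fun y : Fin 14 → ℝ => y 8 ^ 2 + y 9 ^ 2 - 1) x (Pi.single j 1) = _
  have H0 := (((h 8).mul (h 8)).add ((h 9).mul (h 9))).sub_const (1:ℝ)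
  rw [show (fun y : Fin 14 → ℝ => y 8 ^ 2 + y 9 ^ 2 - 1) = fun y : Fin 14 → ℝ => y 8 * y 8 + y 9 * y 9 - 1 from by funext y; ring]
  have H := H0
  erw [H.fderiv]
  simp only [ContinuousLinearMap.sub_apply, ContinuousLinearMap.add_apply,
    ContinuousLinearMap.smul_apply, ContinuousLinearMap.proj_apply, Pi.single_apply,
    smul_eq_mul]
  fin_cases j <;> simp (config := { decide := true }) <;> first | rfl | (simp only [ev14_0, ev14_1, ev14_2, ev14_3, ev14_4, ev14_5, ev14_6, ev14_7, ev14_8, ev14_9, ev14_10, ev14_11, ev14_12, ev14_13]; ring) | ring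

lemma jacRow11 (a1 a2 a3 a4 a5 a6 a7 b1 b2 w1 w2 : ℝ) (x : Fin 14 → ℝ) (j : Fin 14) :
    jacobian (andrewsP a1 a2 a3 a4 a5 a6 a7 b1 b2 w1 w2) x (11 : Fin 13) j =
    ![0, 0, 0, 0, 0, 0, 0, 0, 0, 0, 2 * x 10, 2 * x 11, 0, 0] j := by
  have h : ∀ (k : Fin 14), HasFDerivAt (fun y : Fin 14 → ℝ => y k)
      (ContinuousLinearMap.proj k : (Fin 14 → ℝ) →L[ℝ] ℝ) x := fun k => hasFDerivAt_apply k x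
  show fderiv ℝ (fun y : Fin 14 → ℝ => y 10 ^ 2 + y 11 ^ 2 - 1) x (Pi.single j 1) = _
  have H0 := (((h 10).mul (h 10)).add ((h 11).mul (h 11))).sub_const (1:ℝ)
  rw [show (fun y : Fin 14 → ℝ => y 10 ^ 2 + y 11 ^ 2 - 1) = fun y : Fin 14 → ℝ => y 10 * y 10 + y 11 * y 11 - 1 from by funext y; ring]
  have H := H0
  erw [H.fderiv]
  simp only [ContinuousLinearMap.sub_apply, ContinuousLinearMap.add_apply,
    ContinuousLinearMap.smul_apply, ContinuousLinearMap.proj_apply, Pi.single_apply,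
    smul_eq_mul]
  fin_cases j <;> simp (config := { decide := true }) <;> first | rfl | (simp only [ev14_0, ev14_1, ev14_2, ev14_3, ev14_4, ev14_5, ev14_6, ev14_7, ev14_8, ev14_9, ev14_10, ev14_11, ev14_12, ev14_13]; ring) | ring

lemma jacRow12 (a1 a2 a3 a4 a5 a6 a7 b1 b2 w1 w2 : ℝ) (x : Fin 14 → ℝ) (j : Fin 14) :
    jacobian (andrewsP a1 a2 a3 a4 a5 a6 a7 b1 b2 w1 w2) x (12 : Fin 13) j =
    ![0, 0, 0, 0, 0, 0, 0, 0, 0, 0, 0, 0, 2 * x 12, 2 * x 13] j := by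
  have h : ∀ (k : Fin 14), HasFDerivAt (fun y : Fin 14 → ℝ => y k)
      (ContinuousLinearMap.proj k : (Fin 14 → ℝ) →L[ℝ] ℝ) x := fun k => hasFDerivAt_apply k x
  show fderiv ℝ (fun y : Fin 14 → ℝ => y 12 ^ 2 + y 13 ^ 2 - 1) x (Pi.single j 1) = _
  have H0 := (((h 12).mul (h 12)).add ((h 13).mul (h 13))).sub_const (1:ℝ)
  rw [show (fun y : Fin 14 → ℝ => y 12 ^ 2 + y 13 ^ 2 - 1) = fun y : Fin 14 → ℝ => y 12 * y 12 + y 13 * y 13 - 1 from by funext y; ring]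
  have H := H0
  erw [H.fderiv]
  simp only [ContinuousLinearMap.sub_apply, ContinuousLinearMap.add_apply,
    ContinuousLinearMap.smul_apply, ContinuousLinearMap.proj_apply, Pi.single_apply,
    smul_eq_mul]
  fin_cases j <;> simp (config := { decide := true }) <;> first | rfl | (simp only [ev14_0, ev14_1, ev14_2, ev14_3, ev14_4, ev14_5, ev14_6, ev14_7, ev14_8, ev14_9, ev14_10, ev14_11, ev14_12, ev14_13]; ring) | ring

lemma jacobian_andrews (a1 a2 a3 a4 a5 a6 a7 b1 b2 w1 w2 : ℝ) (x : Fin 14 → ℝ) :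
    jacobian (andrewsP a1 a2 a3 a4 a5 a6 a7 b1 b2 w1 w2) x = Matrix.of
    ![![a1 - a2 * x 2, a2 * x 3, -(a2 * x 0), a2 * x 1, 0, -a3, 0, 0, 0, 0, 0, 0, 0, 0],
      ![-(a2 * x 3), a1 - a2 * x 2, -(a2 * x 1), -(a2 * x 0), a3, 0, 0, 0, 0, 0, 0, 0, 0, 0],
      ![a1 - a2 * x 2, a2 * x 3, -(a2 * x 0), a2 * x 1, 0, 0, -(a4 * x 9), -(a4 * x 8), -(a4 * x 7) - a5, -(a4 * x 6), 0, 0, 0, 0],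
      ![-(a2 * x 3), a1 - a2 * x 2, -(a2 * x 1), -(a2 * x 0), 0, 0, a4 * x 8, -(a4 * x 9), a4 * x 6, -(a4 * x 7) - a5, 0, 0, 0, 0],
      ![a1 - a2 * x 2, a2 * x 3, -(a2 * x 0), a2 * x 1, 0, 0, 0, 0, 0, 0, -(a6 * x 12), a6 * x 13, -(a6 * x 10), a6 * x 11 - a7],
      ![-(a2 * x 3), a1 - a2 * x 2, -(a2 * x 1), -(a2 * x 0), 0, 0, 0, 0, 0, 0, -(a6 * x 13), -(a6 * x 12), -(a6 * x 11) + a7, -(a6 * x 10)],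
      ![2 * x 0, 2 * x 1, 0, 0, 0, 0, 0, 0, 0, 0, 0, 0, 0, 0],
      ![0, 0, 2 * x 2, 2 * x 3, 0, 0, 0, 0, 0, 0, 0, 0, 0, 0],
      ![0, 0, 0, 0, 2 * x 4, 2 * x 5, 0, 0, 0, 0, 0, 0, 0, 0],
      ![0, 0, 0, 0, 0, 0, 2 * x 6, 2 * x 7, 0, 0, 0, 0, 0, 0],
      ![0, 0, 0, 0, 0, 0, 0, 0, 2 * x 8, 2 * x 9, 0, 0, 0, 0],
      ![0, 0, 0, 0, 0, 0, 0, 0, 0, 0, 2 * x 10, 2 * x 11, 0, 0],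
      ![0, 0, 0, 0, 0, 0, 0, 0, 0, 0, 0, 0, 2 * x 12, 2 * x 13]] := by
  ext i j
  fin_cases i
  exacts [jacRow0 a1 a2 a3 a4 a5 a6 a7 b1 b2 w1 w2 x j, jacRow1 a1 a2 a3 a4 a5 a6 a7 b1 b2 w1 w2 x j, jacRow2 a1 a2 a3 a4 a5 a6 a7 b1 b2 w1 w2 x j, jacRow3 a1 a2 a3 a4 a5 a6 a7 b1 b2 w1 w2 x j, jacRow4 a1 a2 a3 a4 a5 a6 a7 b1 b2 w1 w2 x j, jacRow5 a1 a2 a3 a4 a5 a6 a7 b1 b2 w1 w2 x j, jacRow6 a1 a2 a3 a4 a5 a6 a7 b1 b2 w1 w2 x j, jacRow7 a1 a2 a3 a4 a5 a6 a7 b1 b2 w1 w2 x j, jacRow8 a1 a2 a3 a4 a5 a6 a7 b1 b2 w1 w2 x j, jacRow9 a1 a2 a3 a4 a5 a6 a7 b1 b2 w1 w2 x j, jacRow10 a1 a2 a3 a4 a5 a6 a7 b1 b2 w1 w2 x j, jacRow11 a1 a2 a3 a4 a5 a6 a7 b1 b2 w1 w2 x j, jacRow12 a1 a2 a3 a4 a5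 a6 a7 b1 b2 w1 w2 x j]

lemma jacRank (a1 a2 a3 a4 a5 a6 b1 b2 w1 w2 : ℝ) (ha6 : a6 ≠ 0)
    (x : Fin 14 → ℝ) (h6 : x 6 = 0) (h7 : x 7 = -1) (h8 : x 8 = x 13) (h9 : x 9 = -x 12)
    (h10 : x 10 = 0) (h11 : x 11 = 1) (h77 : x 12 ^ 2 + x 13 ^ 2 = 1) :
    (jacobian (andrewsP a1 a2 a3 a4 a5 a6 (a5 + a6 - a4) b1 b2 w1 w2) x).rank < 13 := by
  rw [jacobian_andrews]
  have hv : (![0, 0, x 13, -(x 12), -(x 13), x 12, 0, 0, 0, -(a4/2), -((a4-a5)/2), a6/2,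
      (a4-a5)/2] : Fin 13 → ℝ) ≠ 0 := by
    intro hcon
    have h0 : a6 / 2 = 0 := congrFun hcon 11
    exact ha6 (by linarith)
  refine rank_lt_of_vecMul_eq_zero _ hv ?_
  funext j
  simp only [Matrix.vecMul, dotProduct, Fin.sum_univ_succ, Fin.sum_univ_zero, Matrix.cons_val_zero, Matrix.cons_val_succ,
    Matrix.of_apply, Pi.zero_apply, add_zero, zero_mul, zero_add]
  simp only [h6, h7, h8, h9, h10, h11]
  fin_cases j <;>
    simp only [Fin.mk_zero, Fin.mk_one, Matrix.cons_val_zero, Matrix.cons_val_succ', Matrix.cons_val_succ,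
      Matrix.cons_val_one, Matrix.head_cons] <;>
    first
      | ring1
      | linear_combination (-a4) * h77
      | linear_combination (-a6) * h77
      | linear_combination a4 * h77
      | linear_combination a6 * h77
      | nlinarith [h77]

set_option maxHeartbeats 1000000 in
/-- Theorem 1 of the paper (case `T5`): under the stated parameter conditions,
with `a7 = a5 + a6 - a4`, the Andrews system has at least 2 distinct singular
configurations. -/
theorem exists_two_singular_points (a1 a2 a3 a4 a5 a6 a7 b1 b2 w1 w2 : ℝ)
    (h1 : a1 > 0) (h2 : a2 > 0) (h3 : a3 > 0) (h4 : a4 > 0)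
    (h5 : a5 > 0) (h6 : a6 > 0) (h7 : a7 > 0)
    (ha7 : a7 = a5 + a6 - a4) (h45 : a4 ≠ a5) (h12 : a1 ≠ a2) (hb2w2 : b2 ≠ w2)
    (hex : ∃ c3 s3 c7 s7 : ℝ,
      c3 ^ 2 + s3 ^ 2 = 1 ∧ c7 ^ 2 + s7 ^ 2 = 1 ∧
      (a4 - a5) * s7 + a3 * s3 + b1 - w1 = 0 ∧
      (a5 - a4) * c7 - a3 * c3 + b2 - w2 = 0 ∧
      ((a1 + a2) ^ 2 - (a3 ^ 2 + 2 * a3 * b1 * s3 - 2 * a3 * b2 * c3 + b1 ^ 2 + b2 ^ 2)) *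
        (4 * a1 * a2 -
          ((a1 + a2) ^ 2 -
            (a3 ^ 2 + 2 * a3 * b1 * s3 - 2 * a3 * b2 * c3 + b1 ^ 2 + b2 ^ 2))) > 0) :
    ∃ x y : Fin 14 → ℝ, x ≠ y ∧
      IsSingularAndrews a1 a2 a3 a4 a5 a6 a7 b1 b2 w1 w2 x ∧
      IsSingularAndrews a1 a2 a3 a4 a5 a6 a7 b1 b2 w1 w2 y := by
  obtain ⟨c3, s3, c7, s7, hn3, hn7, he1, he2, hpos⟩ := hex
  subst ha7
  set D := (b1 + a3*s3)^2 + (b2 - a3*c3)^2 with hDdef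
  have hDeq : a3 ^ 2 + 2 * a3 * b1 * s3 - 2 * a3 * b2 * c3 + b1 ^ 2 + b2 ^ 2 = D := by
    rw [hDdef]; linear_combination (-(a3^2)) * hn3
  rw [hDeq] at hpos
  have h4a : (0:ℝ) < 4*a1*a2 := by positivity
  obtain ⟨hP, hQ⟩ : 0 < (a1+a2)^2 - D ∧ 0 < 4*a1*a2 - ((a1+a2)^2 - D) := by
    rcases mul_pos_iff.1 hpos with ⟨hP, hQ⟩ | ⟨hP, hQ⟩
    · exact ⟨hP, hQ⟩
    · linarith
  have hDgt : (a1-a2)^2 < D := by nlinarith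
  have hD0 : 0 < D := lt_of_le_of_lt (sq_nonneg _) hDgt
  set c2 := (a1^2 + a2^2 - D)/(2*a1*a2) with hc2def
  have h2a : (2*a1*a2) ≠ 0 := by positivity
  have hc2 : 2*a1*a2*c2 = a1^2+a2^2 - D := by rw [hc2def]; field_simp
  have hc2sq : c2^2 < 1 := by
    rw [hc2def, div_pow, div_lt_one (by positivity)]
    nlinarith
  set s2 := Real.sqrt (1 - c2^2) with hs2def
  have hs2sq : s2^2 = 1 - c2^2 := Real.sq_sqrt (by nlinarith)
  have hs2pos : 0 < s2 := Real.sqrt_pos.2 (by nlinarith)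
  clear_value s2
  clear hs2def
  have key : ∀ t : ℝ, t^2 = 1 - c2^2 →
      IsSingularAndrews a1 a2 a3 a4 a5 a6 (a5+a6-a4) b1 b2 w1 w2
        ![((a1 - a2*c2)*(b1 + a3*s3) - a2*t*(b2 - a3*c3))/D,
          (a2*t*(b1 + a3*s3) + (a1 - a2*c2)*(b2 - a3*c3))/D,
          c2, t, c3, s3, 0, -1, s7, -c7, 0, 1, c7, s7] := by
    intro t ht
    have hACt : (a1 - a2*c2)^2 + (a2*t)^2 = D := by linear_combination a2^2*ht - hc2
    set q1 : ℝ := ((a1 - a2*c2)*(b1 + a3*s3) - a2*t*(b2 - a3*c3))/D with hq1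
    set q2 : ℝ := (a2*t*(b1 + a3*s3) + (a1 - a2*c2)*(b2 - a3*c3))/D with hq2
    have hB1 : (a1 - a2*c2)*q1 + a2*t*q2 = b1 + a3*s3 := by
      rw [hq1, hq2]; field_simp; linear_combination (b1 + a3*s3) * hACt
    have hB2 : (a1 - a2*c2)*q2 - a2*t*q1 = b2 - a3*c3 := by
      rw [hq1, hq2]; field_simp; linear_combination (b2 - a3*c3) * hACt
    have hq : q1^2 + q2^2 = 1 := by
      rw [hq1, hq2, div_pow, div_pow, ← add_div, div_eq_one_iff_eq (by positivity)]
      linear_combination ((b1 + a3*s3)^2 + (b2 - a3*c3)^2) * hACt + D * hDdef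
    clear_value q1 q2
    clear hq1 hq2
    constructor
    · funext i
      fin_cases i <;>
        simp only [andrewsP, ev14_0, ev14_1, ev14_2, ev14_3, ev14_4, ev14_5, ev14_6, ev14_7,
          ev14_8, ev14_9, ev14_10, ev14_11, ev14_12, ev14_13, Fin.mk_zero, Fin.mk_one,
          Matrix.cons_val_zero, Matrix.cons_val_one, Matrix.head_cons, Matrix.cons_val_succ',
          Matrix.cons_val_succ, Pi.zero_apply] <;>
        [skip; skip; skip; skip; skip; skip; skip; skip; skip; skip; skip; skip; skip]
      · linear_combination hB1
      · linear_combination hB2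
      · linear_combination hB1 + he1
      · linear_combination hB2 + he2
      · linear_combination hB1 + he1
      · linear_combination hB2 + he2
      · linear_combination hq
      · linear_combination ht
      · linear_combination hn3
      · norm_num
      · linear_combination hn7
      · norm_num
      · linear_combination hn7
    · exact jacRank a1 a2 a3 a4 a5 a6 b1 b2 w1 w2 (ne_of_gt h6) _
        rfl rfl rfl rfl rfl rfl hn7
  refine ⟨_, _, ?_, key s2 hs2sq, key (-s2) (by rw [neg_pow]; simpa using hs2sq)⟩
  intro hcon
  have h3' : s2 = -s2 := congrFun hcon 3
  linarith
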